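/- If Λ_j ⊂ ℝ is a sequence of sets with d(Λ_j) ≥ d > 0 for all j, then there is a subsequence which converges weakly to some (possibly empty) set Λ with d(Λ) ≥ d. -/

import Mathlib

open MeasureTheory ENNReal Filter

open Topology

/-- The (inverse) Fourier transform with the paper's normalization:
`f(x) = (2π)^{-1/2} ∫ e^{-itx} F(t) dt`. -/
noncomputable def FT (F : ℝ → ℂ) (x : ℝ) : ℂ :=
  (Real.sqrt (2 * Real.pi) : ℂ)⁻¹ * ∫ t : ℝ, Complex.exp (-(Complex.I * t * x)) * F t

/-- `f` belongs to the Paley–Wiener space `PW_Ω`: it is the Fourier transform of an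
`L²` function `F` vanishing outside `Ω` (such `F` is automatically integrable when
`Ω` has finite measure, so `f` is continuous and pointwise evaluation makes sense). -/
def IsPW (Ω : Set ℝ) (f : ℝ → ℂ) : Prop :=
  ∃ F : ℝ → ℂ, MemLp F 2 volume ∧ (∀ t ∉ Ω, F t = 0) ∧ Integrable F volume ∧
    ∀ x, f x = FT F x

/-- `Λ ⊆ ℝ` has separation constant at least `δ`. -/
def Separated (δ : ℝ) (Λ : Set ℝ) : Prop :=
  ∀ x ∈ Λ, ∀ y ∈ Λ, x ≠ y → δ ≤ |x - y|

/-- `Λ` is the weak limit of the sequence of sets `Λs j`: for every `ε > 0` and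
every interval `(a, b)` with `a, b ∉ Λ`, the inclusions
`Λs j ∩ (a,b) ⊆ (Λ ∩ (a,b)) + (-ε,ε)` and `Λ ∩ (a,b) ⊆ (Λs j ∩ (a,b)) + (-ε,ε)`
hold for all but finitely many `j`. -/
def WeakLim (Λs : ℕ → Set ℝ) (Λ : Set ℝ) : Prop :=
  ∀ ε > (0 : ℝ), ∀ a b : ℝ, a ∉ Λ → b ∉ Λ →
    ∀ᶠ j in atTop,
      (∀ x ∈ Λs j ∩ Set.Ioo a b, ∃ y ∈ Λ ∩ Set.Ioo a b, |x - y| < ε) ∧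
      (∀ y ∈ Λ ∩ Set.Ioo a b, ∃ x ∈ Λs j ∩ Set.Ioo a b, |y - x| < ε)

/-- Truncated distance function to a set. -/
noncomputable def Dd (S : Set ℝ) (x : ℝ) : ℝ := (EMetric.infEdist x S ⊓ 1).toReal

lemma Dd_nonneg (S : Set ℝ) (x : ℝ) : 0 ≤ Dd S x := ENNReal.toReal_nonneg

lemma Dd_le_one (S : Set ℝ) (x : ℝ) : Dd S x ≤ 1 := by
  have : EMetric.infEdist x S ⊓ 1 ≤ 1 := inf_le_right
  simpa [Dd] using ENNReal.toReal_mono (by simp) this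

lemma Dd_lip (S : Set ℝ) (x y : ℝ) : Dd S x ≤ Dd S y + dist x y := by
  set a := EMetric.infEdist x S
  set b := EMetric.infEdist y S
  have hab : a ≤ b + edist x y := EMetric.infEdist_le_infEdist_add_edist
  have h1 : a ⊓ 1 ≤ (b ⊓ 1) + edist x y := by
    rw [← min_add_add_right]
    exact le_min (le_trans inf_le_left hab) (le_trans inf_le_right (le_add_right le_rfl))
  have hb : (b ⊓ 1 : ℝ≥0∞) ≠ ⊤ := ne_top_of_le_ne_top (by simp) inf_le_right
  have he : (edist x y : ℝ≥0∞) ≠ ⊤ := edist_ne_top x y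
  calc Dd S x = (a ⊓ 1).toReal := rfl
    _ ≤ ((b ⊓ 1) + edist x y).toReal := ENNReal.toReal_mono (by simp [ENNReal.add_ne_top, hb, he]) h1
    _ = (b ⊓ 1).toReal + (edist x y).toReal := ENNReal.toReal_add hb he
    _ = Dd S y + dist x y := by rw [← dist_edist]; rfl

lemma Dd_mem {S : Set ℝ} {x : ℝ} (h : x ∈ S) : Dd S x = 0 := by
  have h0 : EMetric.infEdist x S = 0 := EMetric.infEdist_zero_of_mem h
  simp [Dd, h0]

lemma Dd_lt {S : Set ℝ} {x : ℝ} {ε : ℝ} (h : Dd S x < ε) (hε1 : ε ≤ 1) :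
    ∃ p ∈ S, |x - p| < ε := by
  have hε0 : 0 < ε := lt_of_le_of_lt (Dd_nonneg S x) h
  have hne : EMetric.infEdist x S ⊓ 1 ≠ ⊤ := ne_top_of_le_ne_top (by simp) inf_le_right
  have h1 : EMetric.infEdist x S ⊓ 1 < ENNReal.ofReal ε :=
    (ENNReal.lt_ofReal_iff_toReal_lt hne).2 h
  have h2 : EMetric.infEdist x S < ENNReal.ofReal ε := by
    rcases le_or_gt (EMetric.infEdist x S) 1 with hle | hgt
    · rwa [min_eq_left hle] at h1
    · exfalso
      rw [min_eq_right hgt.le] at h1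
      have : ENNReal.ofReal ε ≤ 1 := by
        simpa using ENNReal.ofReal_le_ofReal hε1
      exact absurd (lt_of_lt_of_le h1 this) (lt_irrefl _)
  obtain ⟨p, hp, hd⟩ := EMetric.infEdist_lt_iff.1 h2
  refine ⟨p, hp, ?_⟩
  have : dist x p < ε := by
    rw [dist_edist]
    exact (ENNReal.lt_ofReal_iff_toReal_lt (edist_ne_top x p)).1 hd |>.trans_le le_rfl
  simpa [Real.dist_eq] using this

/-- A `d`-separated set intersected with a bounded interval is finite. -/
lemma sep_finite {d : ℝ} (hd : 0 < d) {S : Set ℝ} (hS : Separated d S) (a b : ℝ) :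
    (S ∩ Set.Ioo a b).Finite := by
  have hinj : Set.InjOn (fun x => ⌊(x - a) / d⌋) (S ∩ Set.Ioo a b) := by
    intro x hx y hy hxy
    by_contra hne
    have hsep := hS x hx.1 y hy.1 hne
    have h1 : |(x - a) / d - (y - a) / d| < 1 := by
      have := Int.abs_sub_lt_one_of_floor_eq_floor (R := ℝ) hxy
      simpa using this
    have : |x - y| / d < 1 := by
      have : (x - a) / d - (y - a) / d = (x - y) / d := by ring
      rw [this, abs_div, abs_of_pos hd] at h1
      exact h1
    have hlt : |x - y| < d := by
      have := (div_lt_one hd).1 this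
      exact this
    linarith
  have himg : (fun x => ⌊(x - a) / d⌋) '' (S ∩ Set.Ioo a b) ⊆
      Set.Icc ⌊(a - a) / d⌋ ⌊(b - a) / d⌋ := by
    rintro k ⟨x, hx, rfl⟩
    constructor
    · exact Int.floor_le_floor (by gcongr; linarith [hx.2.1])
    · exact Int.floor_le_floor (by gcongr; linarith [hx.2.2])
  exact Set.Finite.of_finite_image ((Set.finite_Icc _ _).subset himg) hinj

/-- a sequence of `d`-separated sets has a subsequence converging
weakly to some (possibly empty) set `Λ` with `d(Λ) ≥ d`. -/
theorem stmt10 (d : ℝ) (hd : 0 < d) (Λs : ℕ → Set ℝ) (hsep : ∀ j, Separated d (Λs j)) :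
    ∃ φ : ℕ → ℕ, StrictMono φ ∧ ∃ Λ : Set ℝ, Separated d Λ ∧ WeakLim (Λs ∘ φ) Λ := by
  classical
  -- Encode each set by its truncated distance function restricted to ℚ,
  -- and extract a subsequence converging pointwise on ℚ.
  set u : ℕ → (ℚ → Set.Icc (0:ℝ) 1) :=
    fun j q => ⟨Dd (Λs j) (q : ℝ), Dd_nonneg _ _, Dd_le_one _ _⟩ with hu
  obtain ⟨c, φ, hφ, hconv⟩ := CompactSpace.tendsto_subseq u
  have hq : ∀ q : ℚ, Tendsto (fun j => Dd (Λs (φ j)) (q : ℝ)) atTop (𝓝 (c q : ℝ)) := by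
    intro q
    have h1 : Tendsto (fun j => (u ∘ φ) j q) atTop (𝓝 (c q)) := (tendsto_pi_nhds.1 hconv) q
    have := (continuous_subtype_val.tendsto (c q)).comp h1
    exact this
  -- Pointwise convergence at every real, by the Lipschitz property.
  have habs : ∀ S : Set ℝ, ∀ x y : ℝ, |Dd S x - Dd S y| ≤ dist x y := by
    intro S x y
    rw [abs_sub_le_iff]
    constructor
    · linarith [Dd_lip S x y]
    · linarith [Dd_lip S y x, dist_comm x y]
  have hcauchy : ∀ x : ℝ, ∃ l : ℝ, Tendsto (fun j => Dd (Λs (φ j)) x) atTop (𝓝 l) := by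
    intro x
    have : CauchySeq (fun j => Dd (Λs (φ j)) x) := by
      rw [Metric.cauchySeq_iff]
      intro ε hε
      obtain ⟨q, hq'⟩ := exists_rat_near x (show (0:ℝ) < ε/4 by linarith)
      have hc : CauchySeq (fun j => Dd (Λs (φ j)) (q : ℝ)) := (hq q).cauchySeq
      rw [Metric.cauchySeq_iff] at hc
      obtain ⟨N, hN⟩ := hc (ε/4) (by linarith)
      refine ⟨N, fun m hm n hn => ?_⟩
      have h1 := habs (Λs (φ m)) x q
      have h2 := habs (Λs (φ n)) x q
      have h3 := hN m hm n hn
      have hdxq : dist x (q : ℝ) < ε/4 := by simpa [Real.dist_eq] using hq'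
      have e1 : dist (Dd (Λs (φ m)) x) (Dd (Λs (φ m)) q) < ε/4 := by
        rw [Real.dist_eq]
        exact lt_of_le_of_lt (h1.trans_eq rfl) hdxq
      have e2 : dist (Dd (Λs (φ n)) q) (Dd (Λs (φ n)) x) < ε/4 := by
        rw [Real.dist_eq, abs_sub_comm]
        exact lt_of_le_of_lt (h2.trans_eq rfl) hdxq
      refine lt_of_le_of_lt
        (dist_triangle4 (Dd (Λs (φ m)) x) (Dd (Λs (φ m)) q) (Dd (Λs (φ n)) q) (Dd (Λs (φ n)) x)) ?_
      linarith [e1, h3, e2]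
    exact cauchySeq_tendsto_of_complete this
  choose L hL using hcauchy
  set Λ : Set ℝ := {x | L x = 0} with hΛ
  -- membership criterion
  have key1 : ∀ x ∈ Λ, ∀ ε : ℝ, 0 < ε → ε ≤ 1 →
      ∀ᶠ j in atTop, ∃ p ∈ Λs (φ j), |x - p| < ε := by
    intro x hx ε hε hε1
    have hx0 : L x = 0 := hx
    have := (hL x)
    rw [hx0] at this
    filter_upwards [this.eventually_lt_const hε] with j hj
    exact Dd_lt hj hε1
  -- Λ is d-separated
  have hsepΛ : Separated d Λ := by
    intro x hx y hy hxy
    by_contra hcon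
    push_neg at hcon
    have hxy0 : 0 < |x - y| := abs_pos.2 (sub_ne_zero.2 hxy)
    set ε : ℝ := min 1 (min ((d - |x - y|) / 2) (|x - y| / 3)) with hε
    have hε0 : 0 < ε := by
      apply lt_min one_pos
      apply lt_min <;> linarith
    have hε1 : ε ≤ 1 := min_le_left _ _
    have h1 := key1 x hx ε hε0 hε1
    have h2 := key1 y hy ε hε0 hε1
    obtain ⟨j, hjx, hjy⟩ := (h1.and h2).exists
    obtain ⟨p, hp, hpx⟩ := hjx
    obtain ⟨r, hr, hry⟩ := hjy
    have hεd : ε ≤ (d - |x - y|) / 2 := le_trans (min_le_right _ _) (min_le_left _ _)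
    have hεxy : ε ≤ |x - y| / 3 := le_trans (min_le_right _ _) (min_le_right _ _)
    have hpr : p ≠ r := by
      intro h
      subst h
      have : |x - y| ≤ |x - p| + |p - y| := abs_sub_le x p y
      have hpy : |p - y| = |y - p| := abs_sub_comm p y
      linarith [hpx, hry, hpy ▸ this]
    have := hsep (φ j) p hp r hr hpr
    have htri : |p - r| ≤ |p - x| + |x - y| + |y - r| := by
      have h4 := abs_sub_le p x r
      have h5 := abs_sub_le x y r
      linarith
    have h6 : |p - x| = |x - p| := abs_sub_comm p x
    linarith
  refine ⟨φ, hφ, Λ, hsepΛ, ?_⟩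
  -- Weak convergence
  intro ε hε a b ha hb
  have hfin : (Λ ∩ Set.Ioo a b).Finite := sep_finite hd hsepΛ a b
  -- Direction 2: every point of Λ ∩ (a,b) is approximated
  have dir2 : ∀ᶠ j in atTop, ∀ y ∈ Λ ∩ Set.Ioo a b,
      ∃ x ∈ Λs (φ j) ∩ Set.Ioo a b, |y - x| < ε := by
    rw [Filter.eventually_all_finite hfin]
    intro y hy
    set δ : ℝ := min (min ε 1) (min (y - a) (b - y)) with hδ
    have hδ0 : 0 < δ := by
      apply lt_min (lt_min hε one_pos)
      apply lt_min <;> [linarith [hy.2.1]; linarith [hy.2.2]]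
    have hδ1 : δ ≤ 1 := le_trans (min_le_left _ _) (min_le_right _ _)
    filter_upwards [key1 y hy.1 δ hδ0 hδ1] with j hj
    obtain ⟨p, hp, hpy⟩ := hj
    have hδε : δ ≤ ε := le_trans (min_le_left _ _) (min_le_left _ _)
    have hya : δ ≤ y - a := le_trans (min_le_right _ _) (min_le_left _ _)
    have hyb : δ ≤ b - y := le_trans (min_le_right _ _) (min_le_right _ _)
    have h1 : a < p := by
      have := abs_lt.1 hpy
      linarith [this.2]
    have h2 : p < b := by
      have := abs_lt.1 hpy
      linarith [this.1]
    exact ⟨p, ⟨hp, h1, h2⟩, lt_of_lt_of_le hpy hδε⟩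
  -- Direction 1: by contradiction and compactness of [a,b]
  have dir1 : ∀ᶠ j in atTop, ∀ x ∈ Λs (φ j) ∩ Set.Ioo a b,
      ∃ y ∈ Λ ∩ Set.Ioo a b, |x - y| < ε := by
    by_contra hcon
    rw [Filter.not_eventually] at hcon
    have hcon' : ∃ᶠ j in atTop, ∃ x, x ∈ Λs (φ j) ∩ Set.Ioo a b ∧
        ∀ y ∈ Λ ∩ Set.Ioo a b, ε ≤ |x - y| := by
      apply hcon.mono
      intro j hj
      push_neg at hj
      obtain ⟨x, hx1, hx2⟩ := hj
      exact ⟨x, hx1, hx2⟩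
    obtain ⟨ψ, hψ, hψP⟩ := Filter.extraction_of_frequently_atTop hcon'
    choose x hx hbad using hψP
    have hxIcc : ∀ m, x m ∈ Set.Icc a b := fun m => Set.Ioo_subset_Icc_self (hx m).2
    obtain ⟨x₀, hx₀, σ, hσ, hσconv⟩ := isCompact_Icc.tendsto_subseq hxIcc
    -- L x₀ = 0
    have hcomp : StrictMono (fun m => ψ (σ m)) := hψ.comp hσ
    have htendL : Tendsto (fun m => Dd (Λs (φ (ψ (σ m)))) x₀) atTop (𝓝 (L x₀)) :=
      (hL x₀).comp hcomp.tendsto_atTop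
    have hbound : ∀ m, Dd (Λs (φ (ψ (σ m)))) x₀ ≤ dist x₀ (x (σ m)) := by
      intro m
      have h0 : Dd (Λs (φ (ψ (σ m)))) (x (σ m)) = 0 := Dd_mem (hx (σ m)).1
      have := Dd_lip (Λs (φ (ψ (σ m)))) x₀ (x (σ m))
      rw [h0] at this
      linarith
    have hzero : Tendsto (fun m => Dd (Λs (φ (ψ (σ m)))) x₀) atTop (𝓝 0) := by
      apply squeeze_zero (fun m => Dd_nonneg _ _) hbound
      have : Tendsto (fun m => x (σ m)) atTop (𝓝 x₀) := hσconv
      simpa [dist_comm] using (tendsto_iff_dist_tendsto_zero.1 this)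
    have hLx₀ : L x₀ = 0 := tendsto_nhds_unique htendL hzero
    have hx₀Λ : x₀ ∈ Λ := hLx₀
    have hx₀ab : x₀ ∈ Set.Ioo a b := by
      rcases hx₀.1.lt_or_eq with h | h
      · rcases hx₀.2.lt_or_eq with h' | h'
        · exact ⟨h, h'⟩
        · exact absurd (h' ▸ hx₀Λ) hb
      · exact absurd (h ▸ hx₀Λ) ha
    -- contradiction: eventually x (σ m) is within ε of x₀
    have : ∀ᶠ m in atTop, dist (x (σ m)) x₀ < ε := by
      have : Tendsto (fun m => x (σ m)) atTop (𝓝 x₀) := hσconv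
      exact (tendsto_iff_dist_tendsto_zero.1 this).eventually_lt_const hε
    obtain ⟨m, hm⟩ := this.exists
    have := hbad (σ m) x₀ ⟨hx₀Λ, hx₀ab⟩
    rw [Real.dist_eq] at hm
    linarith
  filter_upwards [dir1, dir2] with j h1 h2
  exact ⟨h1, h2⟩
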